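/- (Generic sech² solitary-wave sufficiency, m = 1 limit of the quadratic cnoidal ansatz.) Let a, b, c, d, σ, j0, j2, k0, k2 ∈ ℝ and λ > 0, and define sech t = 1/cosh t, η(ξ) = j0 + j2·sech²(λξ), w(ξ) = k0 + k2·sech²(λξ). Suppose the four equations hold: −24bλ²σj2 − 24aλ²k2 + 4j2k2 = 0; 8bλ²σj2 + 8aλ²k2 − 2σj2 + 2j0k2 + 2j2k0 + 2k2 = 0; −24dλ²σk2 − 24cλ²j2 + 2k2² = 0; 8dλ²σk2 + 8cλ²j2 − 2σk2 + 2k0k2 + 2j2 = 0. Then (η, w) satisfies, for all ξ ∈ ℝ, the traveling-wave ODE system of the abcd-system: −σ·η′(ξ) + w′(ξ) + (η·w)′(ξ) + a·w‴(ξ) + b·σ·η‴(ξ) = 0 and −σ·w′(ξ) + η′(ξ) + w(ξ)·w′(ξ) + c·η‴(ξ) + d·σ·w‴(ξ) = 0. -/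

import Mathlib

open Real

private lemma hcosh (lam x : ℝ) : HasDerivAt (fun ξ : ℝ => Real.cosh (lam * ξ))
    (lam * Real.sinh (lam * x)) x := by
  have h := (Real.hasDerivAt_cosh (lam * x)).comp x ((hasDerivAt_id x).const_mul lam)
  simpa [mul_comm, Function.comp_def] using h

private lemma hsinh (lam x : ℝ) : HasDerivAt (fun ξ : ℝ => Real.sinh (lam * ξ))
    (lam * Real.cosh (lam * x)) x := by
  have h := (Real.hasDerivAt_sinh (lam * x)).comp x ((hasDerivAt_id x).const_mul lam)
  simpa [mul_comm, Function.comp_def] using h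

private lemma key1 (lam x : ℝ) : HasDerivAt (fun ξ : ℝ => (1 / Real.cosh (lam * ξ)) ^ 2)
    (-2 * lam * Real.sinh (lam * x) / Real.cosh (lam * x) ^ 3) x := by
  have hc : Real.cosh (lam * x) ≠ 0 := (Real.cosh_pos (lam * x)).ne'
  have h := ((hcosh lam x).inv hc).pow 2
  convert h using 1 <;> try (ext ξ; simp [one_div])
  simp only [Pi.inv_apply]
  field_simp
  linear_combination (lam * Real.sinh (lam * x) * 2) * mul_inv_cancel₀ hc

private lemma key2 (lam x : ℝ) : HasDerivAt
    (fun ξ : ℝ => -2 * lam * Real.sinh (lam * ξ) / Real.cosh (lam * ξ) ^ 3)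
    (-2 * lam ^ 2 / Real.cosh (lam * x) ^ 2
      + 6 * lam ^ 2 * Real.sinh (lam * x) ^ 2 / Real.cosh (lam * x) ^ 4) x := by
  have hc : Real.cosh (lam * x) ≠ 0 := (Real.cosh_pos (lam * x)).ne'
  have h := (((hsinh lam x).const_mul (-2 * lam)).div ((hcosh lam x).pow 3)
      (pow_ne_zero 3 hc))
  refine h.congr_deriv ?_
  simp only [Pi.pow_apply]
  field_simp
  ring

private lemma key3 (lam x : ℝ) : HasDerivAt
    (fun ξ : ℝ => -2 * lam ^ 2 / Real.cosh (lam * ξ) ^ 2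
      + 6 * lam ^ 2 * Real.sinh (lam * ξ) ^ 2 / Real.cosh (lam * ξ) ^ 4)
    (16 * lam ^ 3 * Real.sinh (lam * x) / Real.cosh (lam * x) ^ 3
      - 24 * lam ^ 3 * Real.sinh (lam * x) ^ 3 / Real.cosh (lam * x) ^ 5) x := by
  have hc : Real.cosh (lam * x) ≠ 0 := (Real.cosh_pos (lam * x)).ne'
  have h1 := (hasDerivAt_const x (-2 * lam ^ 2)).div ((hcosh lam x).pow 2) (pow_ne_zero 2 hc)
  have h2 := (((hsinh lam x).pow 2).const_mul (6 * lam ^ 2)).div ((hcosh lam x).pow 4)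
      (pow_ne_zero 4 hc)
  have h := h1.add h2
  refine h.congr_deriv ?_
  simp only [Pi.pow_apply]
  field_simp
  ring


/-- generic sech² solitary-wave sufficiency (the `m = 1` limit of the
quadratic cnoidal ansatz): if the four coefficient equations hold, then
`η = j0 + j2·sech²(λξ)`, `w = k0 + k2·sech²(λξ)` solve the traveling-wave ODE system
of the abcd-system. -/
theorem abcd_sech_squared_solitary_wave
    (a b c d σ j0 j2 k0 k2 lam : ℝ) (hlam : 0 < lam)
    (η w : ℝ → ℝ)
    (hη : ∀ ξ : ℝ, η ξ = j0 + j2 * (1 / Real.cosh (lam * ξ)) ^ 2)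
    (hw : ∀ ξ : ℝ, w ξ = k0 + k2 * (1 / Real.cosh (lam * ξ)) ^ 2)
    (h1 : -24*b*lam^2*σ*j2 - 24*a*lam^2*k2 + 4*j2*k2 = 0)
    (h2 : 8*b*lam^2*σ*j2 + 8*a*lam^2*k2 - 2*σ*j2 + 2*j0*k2 + 2*j2*k0 + 2*k2 = 0)
    (h3 : -24*d*lam^2*σ*k2 - 24*c*lam^2*j2 + 2*k2^2 = 0)
    (h4 : 8*d*lam^2*σ*k2 + 8*c*lam^2*j2 - 2*σ*k2 + 2*k0*k2 + 2*j2 = 0) :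
    ∀ ξ : ℝ,
      (-σ * deriv η ξ + deriv w ξ + deriv (fun x => η x * w x) ξ
        + a * deriv (deriv (deriv w)) ξ + b * σ * deriv (deriv (deriv η)) ξ = 0) ∧
      (-σ * deriv w ξ + deriv η ξ + w ξ * deriv w ξ
        + c * deriv (deriv (deriv η)) ξ + d * σ * deriv (deriv (deriv w)) ξ = 0) := by
  have hηf : η = fun ξ => j0 + j2 * (1 / Real.cosh (lam * ξ)) ^ 2 := funext hη
  have hwf : w = fun ξ => k0 + k2 * (1 / Real.cosh (lam * ξ)) ^ 2 := funext hw
  subst hηf hwf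
  have dη : ∀ x : ℝ, HasDerivAt (fun ξ => j0 + j2 * (1 / Real.cosh (lam * ξ)) ^ 2)
      (j2 * (-2 * lam * Real.sinh (lam * x) / Real.cosh (lam * x) ^ 3)) x :=
    fun x => ((key1 lam x).const_mul j2).const_add j0
  have dw : ∀ x : ℝ, HasDerivAt (fun ξ => k0 + k2 * (1 / Real.cosh (lam * ξ)) ^ 2)
      (k2 * (-2 * lam * Real.sinh (lam * x) / Real.cosh (lam * x) ^ 3)) x :=
    fun x => ((key1 lam x).const_mul k2).const_add k0
  have Dη : deriv (fun ξ => j0 + j2 * (1 / Real.cosh (lam * ξ)) ^ 2)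
      = fun x => j2 * (-2 * lam * Real.sinh (lam * x) / Real.cosh (lam * x) ^ 3) :=
    funext fun x => (dη x).deriv
  have Dw : deriv (fun ξ => k0 + k2 * (1 / Real.cosh (lam * ξ)) ^ 2)
      = fun x => k2 * (-2 * lam * Real.sinh (lam * x) / Real.cosh (lam * x) ^ 3) :=
    funext fun x => (dw x).deriv
  have D2η : deriv (fun x => j2 * (-2 * lam * Real.sinh (lam * x) / Real.cosh (lam * x) ^ 3))
      = fun x => j2 * (-2 * lam ^ 2 / Real.cosh (lam * x) ^ 2
        + 6 * lam ^ 2 * Real.sinh (lam * x) ^ 2 / Real.cosh (lam * x) ^ 4) :=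
    funext fun x => ((key2 lam x).const_mul j2).deriv
  have D2w : deriv (fun x => k2 * (-2 * lam * Real.sinh (lam * x) / Real.cosh (lam * x) ^ 3))
      = fun x => k2 * (-2 * lam ^ 2 / Real.cosh (lam * x) ^ 2
        + 6 * lam ^ 2 * Real.sinh (lam * x) ^ 2 / Real.cosh (lam * x) ^ 4) :=
    funext fun x => ((key2 lam x).const_mul k2).deriv
  have D3η : deriv (fun x => j2 * (-2 * lam ^ 2 / Real.cosh (lam * x) ^ 2
        + 6 * lam ^ 2 * Real.sinh (lam * x) ^ 2 / Real.cosh (lam * x) ^ 4))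
      = fun x => j2 * (16 * lam ^ 3 * Real.sinh (lam * x) / Real.cosh (lam * x) ^ 3
        - 24 * lam ^ 3 * Real.sinh (lam * x) ^ 3 / Real.cosh (lam * x) ^ 5) :=
    funext fun x => ((key3 lam x).const_mul j2).deriv
  have D3w : deriv (fun x => k2 * (-2 * lam ^ 2 / Real.cosh (lam * x) ^ 2
        + 6 * lam ^ 2 * Real.sinh (lam * x) ^ 2 / Real.cosh (lam * x) ^ 4))
      = fun x => k2 * (16 * lam ^ 3 * Real.sinh (lam * x) / Real.cosh (lam * x) ^ 3
        - 24 * lam ^ 3 * Real.sinh (lam * x) ^ 3 / Real.cosh (lam * x) ^ 5) :=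
    funext fun x => ((key3 lam x).const_mul k2).deriv
  intro ξ
  have dprod : deriv (fun x => (j0 + j2 * (1 / Real.cosh (lam * x)) ^ 2)
        * (k0 + k2 * (1 / Real.cosh (lam * x)) ^ 2)) ξ
      = j2 * (-2 * lam * Real.sinh (lam * ξ) / Real.cosh (lam * ξ) ^ 3)
          * (k0 + k2 * (1 / Real.cosh (lam * ξ)) ^ 2)
        + (j0 + j2 * (1 / Real.cosh (lam * ξ)) ^ 2)
          * (k2 * (-2 * lam * Real.sinh (lam * ξ) / Real.cosh (lam * ξ) ^ 3)) :=
    ((dη ξ).mul (dw ξ)).deriv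
  rw [Dη, Dw, D2η, D2w, D3η, D3w]
  rw [dprod]
  have hc : Real.cosh (lam * ξ) ≠ 0 := (Real.cosh_pos (lam * ξ)).ne'
  have hs : Real.sinh (lam * ξ) ^ 2 = Real.cosh (lam * ξ) ^ 2 - 1 := Real.sinh_sq (lam * ξ)
  constructor
  · field_simp
    linear_combination (-lam * Real.sinh (lam*ξ)) * h1
      + (-lam * Real.sinh (lam*ξ) * Real.cosh (lam*ξ) ^ 2) * h2
      + (-24 * lam ^ 3 * (a*k2 + b*σ*j2) * Real.sinh (lam*ξ)) * hs
  · field_simp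
    linear_combination (-lam * Real.sinh (lam*ξ)) * h3
      + (-lam * Real.sinh (lam*ξ) * Real.cosh (lam*ξ) ^ 2) * h4
      + (-24 * lam ^ 3 * (c*j2 + d*σ*k2) * Real.sinh (lam*ξ)) * hs
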